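/- Let c > 0 and S ∈ ℕ with S ≥ 1. If x is a standard complex Gaussian vector in ℂ^S, then P(‖x‖ ≤ c√S) ≤ e^{S(1 + 2 log c)} / √(2πS). -/

import Mathlib

open MeasureTheory


lemma stirling_lower (n : ℕ) (hn : 1 ≤ n) :
    Real.sqrt (2 * Real.pi * n) * (n / Real.exp 1) ^ n ≤ n.factorial := by
  obtain ⟨m, rfl⟩ := Nat.exists_eq_add_of_le hn
  have hπ : Real.sqrt Real.pi ≤ Stirling.stirlingSeq (1 + m) := by
    have := Stirling.stirlingSeq'_antitone.le_of_tendsto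
      ((Stirling.tendsto_stirlingSeq_sqrt_pi).comp (Filter.tendsto_add_atTop_nat 1)) m
    simpa [Function.comp, Nat.succ_eq_add_one, Nat.add_comm] using this
  have hpos : (0:ℝ) < Real.sqrt (2 * (1+m : ℕ)) * ((1+m : ℕ) / Real.exp 1) ^ (1+m) := by
    positivity
  rw [Stirling.stirlingSeq, le_div_iff₀ hpos] at hπ
  calc Real.sqrt (2 * Real.pi * (1+m : ℕ)) * ((1+m : ℕ) / Real.exp 1) ^ (1+m)
      = Real.sqrt Real.pi * (Real.sqrt (2 * (1+m : ℕ)) * ((1+m : ℕ) / Real.exp 1) ^ (1+m)) := by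
        rw [show 2 * Real.pi * (1+m:ℕ) = Real.pi * (2 * (1+m:ℕ)) by ring,
          Real.sqrt_mul Real.pi_nonneg]
        ring
    _ ≤ (1+m).factorial := hπ

lemma volume_small_ball (S : ℕ) (hS : 1 ≤ S) (r : ℝ) :
    volume {x : Fin S → ℂ | Real.sqrt (∑ a, ‖x a‖ ^ 2) ≤ r}
      = ENNReal.ofReal r ^ (2 * S) *
        ENNReal.ofReal (Real.sqrt Real.pi ^ (2 * S) / S.factorial) := by
  have : Nonempty (Fin S) := Fin.pos_iff_nonempty.mp hS
  set e1 := (MeasurableEquiv.toLp 2 (Fin S ⊕ Fin S → ℝ)).symm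
  set e2 := MeasurableEquiv.sumPiEquivProdPi (fun _ : Fin S ⊕ Fin S => ℝ)
  set e3 := (MeasurableEquiv.arrowProdEquivProdArrow ℝ ℝ (Fin S)).symm
  set e4 : (Fin S → ℝ × ℝ) → (Fin S → ℂ) :=
    fun g a => Complex.measurableEquivRealProd.symm (g a)
  have h1 : MeasurePreserving e1 := EuclideanSpace.volume_preserving_symm_measurableEquiv_toLp _
  have h2 : MeasurePreserving e2 := volume_measurePreserving_sumPiEquivProdPi _
  have h3 : MeasurePreserving e3 :=
    (volume_measurePreserving_arrowProdEquivProdArrow ℝ ℝ (Fin S)).symm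
  have h4 : MeasurePreserving e4 :=
    volume_preserving_pi (fun _ =>
      Complex.volume_preserving_equiv_real_prod.symm Complex.measurableEquivRealProd)
  have hT : MeasurePreserving (e4 ∘ e3 ∘ e2 ∘ e1) := h4.comp (h3.comp (h2.comp h1))
  have hAmeas : MeasurableSet {x : Fin S → ℂ | Real.sqrt (∑ a, ‖x a‖ ^ 2) ≤ r} := by
    apply measurableSet_le <;> fun_prop
  have key : (e4 ∘ e3 ∘ e2 ∘ e1) ⁻¹' {x : Fin S → ℂ | Real.sqrt (∑ a, ‖x a‖ ^ 2) ≤ r}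
      = Metric.closedBall (0 : EuclideanSpace ℝ (Fin S ⊕ Fin S)) r := by
    ext y
    have hnorm : ∀ a : Fin S, ‖(e4 ∘ e3 ∘ e2 ∘ e1) y a‖ ^ 2
        = y (Sum.inl a) ^ 2 + y (Sum.inr a) ^ 2 := by
      intro a
      have : (e4 ∘ e3 ∘ e2 ∘ e1) y a = Complex.mk (y (Sum.inl a)) (y (Sum.inr a)) := rfl
      rw [this, Complex.sq_norm]
      simp [Complex.normSq_mk]; ring
    simp only [Set.mem_preimage, Set.mem_setOf_eq, Metric.mem_closedBall, dist_zero_right]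
    rw [EuclideanSpace.norm_eq]
    simp_rw [hnorm, Real.norm_eq_abs, sq_abs, Fintype.sum_sum_type]
    rw [Finset.sum_add_distrib]
  rw [← hT.measure_preimage hAmeas.nullMeasurableSet, key,
    EuclideanSpace.volume_closedBall]
  have hcard : Fintype.card (Fin S ⊕ Fin S) = 2 * S := by simp [two_mul]
  rw [hcard]
  congr 2
  rw [show ((2 * S : ℕ) : ℝ) / 2 + 1 = (S : ℝ) + 1 by push_cast; ring]
  rw [Real.Gamma_nat_eq_factorial]

/-- small-ball estimate for the standard complex Gaussian.
Let `c > 0` and `S ≥ 1`.  If `x` is a standard complex Gaussian vector in `ℂ^S`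
(density `π^{-S} exp (-‖x‖²)`, with `‖x‖² = ∑ a, ‖x a‖²` the Hermitian norm), then
`P(‖x‖ ≤ c √S) ≤ exp (S (1 + 2 log c)) / √(2 π S)`. -/
theorem stmt3 (S : ℕ) (hS : 1 ≤ S) (c : ℝ) (hc : 0 < c) :
    (volume.withDensity (fun x : Fin S → ℂ =>
        ENNReal.ofReal ((Real.pi ^ S)⁻¹ * Real.exp (-(∑ a, ‖x a‖ ^ 2)))))
      {x : Fin S → ℂ | Real.sqrt (∑ a, ‖x a‖ ^ 2) ≤ c * Real.sqrt S}
      ≤ ENNReal.ofReal (Real.exp (S * (1 + 2 * Real.log c)) / Real.sqrt (2 * Real.pi * S)) := by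
  set r : ℝ := c * Real.sqrt S with hr_def
  have hr : 0 ≤ r := by positivity
  set A := {x : Fin S → ℂ | Real.sqrt (∑ a, ‖x a‖ ^ 2) ≤ r} with hA_def
  have hAmeas : MeasurableSet A := by apply measurableSet_le <;> fun_prop
  -- step 1: bound by constant density
  have step1 : (volume.withDensity (fun x : Fin S → ℂ =>
        ENNReal.ofReal ((Real.pi ^ S)⁻¹ * Real.exp (-(∑ a, ‖x a‖ ^ 2))))) A
      ≤ ENNReal.ofReal ((Real.pi ^ S)⁻¹) * volume A := by
    rw [withDensity_apply _ hAmeas]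
    calc ∫⁻ x in A, ENNReal.ofReal ((Real.pi ^ S)⁻¹ * Real.exp (-(∑ a, ‖x a‖ ^ 2))) ∂volume
        ≤ ∫⁻ _ in A, ENNReal.ofReal ((Real.pi ^ S)⁻¹) ∂volume := by
          apply lintegral_mono
          intro x
          apply ENNReal.ofReal_le_ofReal
          have h1 : Real.exp (-(∑ a, ‖x a‖ ^ 2)) ≤ 1 := by
            rw [Real.exp_le_one_iff]
            simp only [neg_nonpos]
            positivity
          calc (Real.pi ^ S)⁻¹ * Real.exp (-(∑ a, ‖x a‖ ^ 2))
              ≤ (Real.pi ^ S)⁻¹ * 1 := by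
                apply mul_le_mul_of_nonneg_left h1
                positivity
            _ = (Real.pi ^ S)⁻¹ := mul_one _
      _ = ENNReal.ofReal ((Real.pi ^ S)⁻¹) * volume A := by
          rw [setLIntegral_const, mul_comm]
  rw [volume_small_ball S hS r] at step1
  refine step1.trans ?_
  rw [← ENNReal.ofReal_pow hr, ← ENNReal.ofReal_mul (by positivity),
    ← ENNReal.ofReal_mul (by positivity)]
  apply ENNReal.ofReal_le_ofReal
  have hS0 : (0:ℝ) < S := by exact_mod_cast hS
  have hfac : (0:ℝ) < S.factorial := by exact_mod_cast S.factorial_pos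
  have hsq : (0:ℝ) < Real.sqrt (2 * Real.pi * S) := by positivity
  -- simplify LHS to c^(2S) * S^S / S!
  have hLHS : (Real.pi ^ S)⁻¹ * (r ^ (2 * S) * (Real.sqrt Real.pi ^ (2 * S) / S.factorial))
      = c ^ (2 * S) * (S:ℝ) ^ S / S.factorial := by
    have h1 : Real.sqrt Real.pi ^ (2 * S) = Real.pi ^ S := by
      rw [pow_mul, Real.sq_sqrt Real.pi_nonneg]
    have h2 : r ^ (2 * S) = c ^ (2 * S) * (S:ℝ) ^ S := by
      rw [hr_def, mul_pow]
      congr 1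
      rw [pow_mul, Real.sq_sqrt hS0.le]
    rw [h1, h2]
    field_simp
  rw [hLHS]
  -- RHS: exp(S(1+2 log c)) = e^S * c^(2S)
  have hRHS : Real.exp ((S:ℝ) * (1 + 2 * Real.log c)) = Real.exp 1 ^ S * c ^ (2 * S) := by
    have hcast : (S:ℝ) * (1 + 2 * Real.log c) = (S:ℝ) * 1 + ((2 * S : ℕ) : ℝ) * Real.log c := by
      push_cast; ring
    rw [hcast, Real.exp_add, Real.exp_nat_mul, Real.exp_nat_mul, Real.exp_log hc]
  have hst := stirling_lower S hS
  have hden : (0:ℝ) < Real.sqrt (2 * Real.pi * S) * ((S:ℝ) / Real.exp 1) ^ S := by positivity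
  calc c ^ (2 * S) * (S:ℝ) ^ S / S.factorial
      ≤ c ^ (2 * S) * (S:ℝ) ^ S / (Real.sqrt (2 * Real.pi * S) * ((S:ℝ) / Real.exp 1) ^ S) :=
        div_le_div_of_nonneg_left (by positivity) hden hst
    _ = Real.exp ((S:ℝ) * (1 + 2 * Real.log c)) / Real.sqrt (2 * Real.pi * S) := by
        rw [hRHS, div_pow]
        have he : Real.exp 1 ≠ 0 := (Real.exp_pos 1).ne'
        field_simp
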